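/- If T is a continuous linear operator on a separable Fréchet space such that for every pair of nonempty open sets U, V and every m there is x ∈ U with N_T(x,V) containing an arithmetic progression of length m, then the set of AP-hypercyclic vectors for T is residual (comeager) in X. -/

import Mathlib

open Filter Topology

def ContainsAPs (A : Set ℕ) : Prop :=
  ∀ m : ℕ, ∃ a k : ℕ, 1 ≤ a ∧ 1 ≤ k ∧ ∀ j ≤ m, a + j * k ∈ A

theorem AP_hypercyclic_vectors_residual
    {X : Type*} [AddCommGroup X] [Module ℝ X] [UniformSpace X] [IsUniformAddGroup X]
    [ContinuousSMul ℝ X] [LocallyConvexSpace ℝ X] [CompleteSpace X]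
    [TopologicalSpace.MetrizableSpace X] [TopologicalSpace.SeparableSpace X]
    (T : X →L[ℝ] X)
    (h : ∀ U V : Set X, IsOpen U → U.Nonempty → IsOpen V → V.Nonempty →
        ∀ m : ℕ, ∃ x ∈ U, ∃ a k : ℕ, 1 ≤ a ∧ 1 ≤ k ∧
          ∀ j < m, (T ^ (a + j * k)) x ∈ V) :
    {x : X | ∀ U : Set X, IsOpen U → U.Nonempty →
        ContainsAPs {n : ℕ | (T ^ n) x ∈ U}} ∈ residual X := by
  haveI : SecondCountableTopology X := by
    have hcg : (uniformity X).IsCountablyGenerated :=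
      IsUniformAddGroup.uniformity_countably_generated
    exact UniformSpace.secondCountable_of_separable X
  obtain ⟨b, hbc, hbne, hbasis⟩ := TopologicalSpace.exists_countable_basis X
  set G : Set X → ℕ → Set X := fun V m =>
    {x | ∃ a k : ℕ, 1 ≤ a ∧ 1 ≤ k ∧ ∀ j ≤ m, (T ^ (a + j * k)) x ∈ V} with hG
  have hGopen : ∀ V : Set X, IsOpen V → ∀ m : ℕ, IsOpen (G V m) := by
    intro V hV m
    have : G V m = ⋃ (a : ℕ) (k : ℕ) (_ : 1 ≤ a) (_ : 1 ≤ k),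
        ⋂ (j : ℕ) (_ : j ≤ m), (T ^ (a + j * k)) ⁻¹' V := by
      ext x
      simp only [hG, Set.mem_setOf_eq, Set.mem_iUnion, Set.mem_iInter, Set.mem_preimage]
      tauto
    rw [this]
    refine isOpen_iUnion fun a => isOpen_iUnion fun k => isOpen_iUnion fun _ =>
      isOpen_iUnion fun _ => ?_
    have hfin : (Set.Iic m).Finite := Set.finite_Iic m
    refine hfin.isOpen_biInter fun j _ => hV.preimage (T ^ (a + j * k)).continuous
  have hGdense : ∀ V ∈ b, ∀ m : ℕ, Dense (G V m) := by
    intro V hV m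
    rw [dense_iff_inter_open]
    intro U hU hUne
    have hVopen := hbasis.isOpen hV
    have hVne : V.Nonempty := by
      rw [Set.nonempty_iff_ne_empty]; rintro rfl; exact hbne hV
    obtain ⟨x, hxU, a, k, ha, hk, hx⟩ := h U V hU hUne hVopen hVne (m + 1)
    exact ⟨x, hxU, a, k, ha, hk, fun j hj => hx j (Nat.lt_succ_of_le hj)⟩
  have hmem : (⋂ V ∈ b, ⋂ m : ℕ, G V m) ∈ residual X := by
    refine (countable_bInter_mem hbc).2 fun V hV => (countable_iInter_mem.2 ?_)
    exact fun m => residual_of_dense_open (hGopen V (hbasis.isOpen hV) m) (hGdense V hV m)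
  refine mem_of_superset hmem ?_
  intro x hx U hU hUne m
  obtain ⟨y, hy⟩ := hUne
  obtain ⟨V, hVb, hyV, hVU⟩ := hbasis.exists_subset_of_mem_open hy hU
  simp only [Set.mem_iInter] at hx
  obtain ⟨a, k, ha, hk, hjk⟩ := hx V hVb m
  exact ⟨a, k, ha, hk, fun j hj => hVU (hjk j hj)⟩
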